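/- arXiv:2512.24892 — 2 statements merged into one kernel-verified Lean document; each statement's English description precedes it below -/
import Mathlib

section
/- Let T ∈ (0, ∞], let t₀ ∈ ℝ with t₀ < T, let τ ∈ (0, T − t₀), and let a > 0 and b > 0. Suppose y : [t₀, T) → [0, ∞) is absolutely continuous on every compact subinterval of [t₀, T) and satisfies y'(t) + a·y(t) ≤ h(t) for almost every t ∈ (t₀, T), where h : [t₀, T) → [0, ∞) is locally Lebesgue integrable and satisfies (1/τ)·∫_t^{t+τ} h(s) ds ≤ b for all t ∈ [t₀, T − τ). Then y(t) ≤ y(t₀)·e^{−a(t−t₀)} + b·τ/(1 − e^{−a·τ}) for all t ∈ [t₀, T). -/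
open MeasureTheory Real

lemma odi_exp_int (a t₀ u t : ℝ) :
    ∫ s in u..t, a * Real.exp (a * (s - t₀))
      = Real.exp (a * (t - t₀)) - Real.exp (a * (u - t₀)) := by
  have hderiv : ∀ s ∈ Set.uIcc u t, HasDerivAt (fun s => Real.exp (a * (s - t₀)))
      (a * Real.exp (a * (s - t₀))) s := by
    intro s _
    have h1 : HasDerivAt (fun s : ℝ => a * (s - t₀)) a s := by
      simpa using ((hasDerivAt_id s).sub_const t₀).const_mul a
    simpa [mul_comm, Function.comp_def] using (Real.hasDerivAt_exp (a * (s - t₀))).comp s h1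
  exact intervalIntegral.integral_eq_sub_of_hasDerivAt hderiv
    (Continuous.intervalIntegrable (by continuity) u t)

lemma odi_swap {a t₀ t : ℝ} (ha : 0 < a) (ht : t₀ ≤ t) {g : ℝ → ℝ}
    (hg : IntervalIntegrable g volume t₀ t) :
    ∫ s in t₀..t, (a * Real.exp (a * (s - t₀))) * ∫ u in t₀..s, g u
      = ∫ u in t₀..t, g u * (Real.exp (a * (t - t₀)) - Real.exp (a * (u - t₀))) := by
  set μ := volume.restrict (Set.Ioc t₀ t) with hμ
  set k : ℝ × ℝ → ℝ := fun p =>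
    Set.indicator {q : ℝ × ℝ | q.2 ≤ q.1}
      (fun q => (a * Real.exp (a * (q.1 - t₀))) * g q.2) p with hk
  have hgi : IntegrableOn g (Set.Ioc t₀ t) volume := by
    simpa [intervalIntegrable_iff, Set.uIoc_of_le ht] using hg
  have hmeas_set : MeasurableSet {q : ℝ × ℝ | q.2 ≤ q.1} :=
    measurableSet_le measurable_snd measurable_fst
  have hEcont : Continuous (fun q : ℝ × ℝ => a * Real.exp (a * (q.1 - t₀))) := by continuity
  have hsm : AEStronglyMeasurable
      (fun q : ℝ × ℝ => (a * Real.exp (a * (q.1 - t₀))) * g q.2) (μ.prod μ) :=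
    hEcont.aestronglyMeasurable.mul
      (hgi.aestronglyMeasurable.comp_quasiMeasurePreserving
        Measure.quasiMeasurePreserving_snd)
  have hprodmem : ∀ᵐ p ∂(μ.prod μ), p ∈ Set.Ioc t₀ t ×ˢ Set.Ioc t₀ t := by
    rw [hμ, Measure.prod_restrict]
    exact ae_restrict_mem (measurableSet_Ioc.prod measurableSet_Ioc)
  have hkint : Integrable k (μ.prod μ) := by
    refine Integrable.mono'
      (g := fun p : ℝ × ℝ => (a * Real.exp (a * (t - t₀))) * |g p.2|) ?_
      (hsm.indicator hmeas_set) ?_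
    · exact ((integrableOn_const (C := a * Real.exp (a * (t - t₀))) (hs := measure_Ioc_lt_top.ne))).mul_prod hgi.abs
    · filter_upwards [hprodmem] with p hp
      rcases hp with ⟨hp1, hp2⟩
      by_cases hmem : p ∈ {q : ℝ × ℝ | q.2 ≤ q.1}
      · rw [hk]
        simp only [Set.indicator_of_mem hmem]
        rw [Real.norm_eq_abs, abs_mul]
        have h1 : |a * Real.exp (a * (p.1 - t₀))| ≤ a * Real.exp (a * (t - t₀)) := by
          rw [abs_of_nonneg (by positivity)]
          exact mul_le_mul_of_nonneg_left
            (Real.exp_le_exp.2 (by nlinarith [hp1.2])) ha.le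
        exact mul_le_mul_of_nonneg_right h1 (abs_nonneg _)
      · rw [hk]
        simp only [Set.indicator_of_notMem hmem, norm_zero]
        positivity
  have hswap : ∫ s, (∫ u, k (s, u) ∂μ) ∂μ = ∫ u, (∫ s, k (s, u) ∂μ) ∂μ :=
    integral_integral_swap (by exact hkint)
  have hL : ∫ s, (∫ u, k (s, u) ∂μ) ∂μ
      = ∫ s in t₀..t, (a * Real.exp (a * (s - t₀))) * ∫ u in t₀..s, g u := by
    rw [intervalIntegral.integral_of_le ht]
    refine integral_congr_ae ?_
    filter_upwards [ae_restrict_mem measurableSet_Ioc] with s hs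
    have hkind : (fun u => k (s, u))
        = Set.indicator (Set.Iic s) (fun u => (a * Real.exp (a * (s - t₀))) * g u) := by
      funext u
      simp [hk, Set.indicator_apply, Set.mem_Iic, Set.mem_setOf_eq]
    rw [hkind, integral_indicator measurableSet_Iic, hμ,
      Measure.restrict_restrict measurableSet_Iic]
    have hset : Set.Iic s ∩ Set.Ioc t₀ t = Set.Ioc t₀ s := by
      ext x
      simp only [Set.mem_inter_iff, Set.mem_Iic, Set.mem_Ioc]
      constructor
      · rintro ⟨h1, h2, h3⟩; exact ⟨h2, h1⟩
      · rintro ⟨h1, h2⟩; exact ⟨h2, h1, h2.trans hs.2⟩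
    rw [hset, integral_const_mul, ← intervalIntegral.integral_of_le hs.1.le]
  have hR : ∫ u, (∫ s, k (s, u) ∂μ) ∂μ
      = ∫ u in t₀..t, g u * (Real.exp (a * (t - t₀)) - Real.exp (a * (u - t₀))) := by
    rw [intervalIntegral.integral_of_le ht]
    refine integral_congr_ae ?_
    filter_upwards [ae_restrict_mem measurableSet_Ioc] with u hu
    have hkind : (fun s => k (s, u))
        = Set.indicator (Set.Ici u) (fun s => (a * Real.exp (a * (s - t₀))) * g u) := by
      funext s
      simp [hk, Set.indicator_apply, Set.mem_Ici, Set.mem_setOf_eq]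
    rw [hkind, integral_indicator measurableSet_Ici, hμ,
      Measure.restrict_restrict measurableSet_Ici]
    have hset : Set.Ici u ∩ Set.Ioc t₀ t = Set.Icc u t := by
      ext x
      simp only [Set.mem_inter_iff, Set.mem_Ici, Set.mem_Ioc, Set.mem_Icc]
      constructor
      · rintro ⟨h1, h2, h3⟩; exact ⟨h1, h3⟩
      · rintro ⟨h1, h2⟩; exact ⟨h1, lt_of_lt_of_le hu.1 h1, h2⟩
    rw [hset, MeasureTheory.integral_Icc_eq_integral_Ioc,
      ← intervalIntegral.integral_of_le hu.2,
      intervalIntegral.integral_mul_const, odi_exp_int, mul_comm]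
  rw [← hL, hswap, hR]

lemma odi_parts {a t₀ t c : ℝ} (ha : 0 < a) (ht : t₀ ≤ t) {g : ℝ → ℝ}
    (hg : IntervalIntegrable g volume t₀ t) :
    ∫ s in t₀..t, Real.exp (a * (s - t₀)) * (g s + a * (c + ∫ u in t₀..s, g u))
      = Real.exp (a * (t - t₀)) * (c + ∫ u in t₀..t, g u) - c := by
  set E : ℝ → ℝ := fun s => Real.exp (a * (s - t₀)) with hE
  set F : ℝ → ℝ := fun s => ∫ u in t₀..s, g u with hF
  have hEc : Continuous E := by continuity
  have hgi : IntegrableOn g (Set.Ioc t₀ t) volume := by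
    simpa [intervalIntegrable_iff, Set.uIoc_of_le ht] using hg
  have hgIcc : IntegrableOn g (Set.uIcc t₀ t) volume := by
    rw [IntegrableOn, Set.uIcc_of_le ht, ← Measure.restrict_congr_set Ioc_ae_eq_Icc]
    exact hgi
  have hFcont : ContinuousOn F (Set.uIcc t₀ t) :=
    intervalIntegral.continuousOn_primitive_interval hgIcc
  have i1 : IntervalIntegrable (fun s => E s * g s) volume t₀ t :=
    hg.continuousOn_mul hEc.continuousOn
  have i2 : IntervalIntegrable (fun s => c * (a * E s)) volume t₀ t :=
    Continuous.intervalIntegrable (by continuity) t₀ t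
  have i3 : IntervalIntegrable (fun s => (a * E s) * F s) volume t₀ t :=
    ContinuousOn.intervalIntegrable (((continuous_const.mul hEc).continuousOn).mul hFcont)
  have hintegrand : (fun s => E s * (g s + a * (c + F s)))
      = fun s => E s * g s + (c * (a * E s) + (a * E s) * F s) := by
    funext s; ring
  have h2 : ∫ s in t₀..t, c * (a * E s) = c * (E t - 1) := by
    rw [intervalIntegral.integral_const_mul, odi_exp_int]
    simp [hE]
  have h3 : ∫ s in t₀..t, (a * E s) * F s = F t * E t - ∫ s in t₀..t, g s * E s := by
    rw [odi_swap ha ht hg]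
    have : (fun u => g u * (E t - E u)) = fun u => g u * E t - g u * E u := by
      funext u; ring
    rw [this, intervalIntegral.integral_sub (hg.mul_const _)
      (hg.mul_continuousOn hEc.continuousOn), intervalIntegral.integral_mul_const]
  have hcomm : ∫ s in t₀..t, E s * g s = ∫ s in t₀..t, g s * E s := by
    congr 1; funext s; ring
  rw [hintegrand, intervalIntegral.integral_add i1 (i2.add i3),
    intervalIntegral.integral_add i2 i3, h2, h3, hcomm]
  ring

/-- **Lemma (ODI comparison).** Let `T ∈ (0, ∞]`, `t₀ ∈ ℝ` with `t₀ < T`,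
`τ ∈ (0, T − t₀)`, `a > 0`, `b > 0`. Suppose `y : [t₀, T) → [0, ∞)` is absolutely
continuous on compact subintervals (encoded via the fundamental theorem of calculus:
`y t = y t₀ + ∫_{t₀}^t y'` with `y'` locally integrable) and satisfies
`y' t + a * y t ≤ h t` for a.e. `t ∈ (t₀, T)`, where `h ≥ 0` is locally integrable with
`(1/τ) ∫_t^{t+τ} h ≤ b` for all `t ∈ [t₀, T − τ)`. Then
`y t ≤ y t₀ * exp (−a (t − t₀)) + b τ / (1 − exp (−a τ))` for all `t ∈ [t₀, T)`. -/
theorem odi_comparison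
    (T : EReal) (t₀ τ a b : ℝ)
    (hT : 0 < T) (ht₀T : (t₀ : EReal) < T)
    (hτ0 : 0 < τ) (hτT : (τ : EReal) < T - (t₀ : EReal))
    (ha : 0 < a) (hb : 0 < b)
    (y y' h : ℝ → ℝ)
    (hy_nonneg : ∀ t : ℝ, t₀ ≤ t → (t : EReal) < T → 0 ≤ y t)
    (hy'_int : ∀ t : ℝ, t₀ ≤ t → (t : EReal) < T → IntervalIntegrable y' volume t₀ t)
    (hy_ac : ∀ t : ℝ, t₀ ≤ t → (t : EReal) < T → y t = y t₀ + ∫ s in t₀..t, y' s)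
    (hh_nonneg : ∀ t : ℝ, t₀ ≤ t → (t : EReal) < T → 0 ≤ h t)
    (hh_int : ∀ t : ℝ, t₀ ≤ t → (t : EReal) < T → IntervalIntegrable h volume t₀ t)
    (hODI : ∀ᵐ t ∂(volume.restrict {t : ℝ | t₀ < t ∧ (t : EReal) < T}),
      y' t + a * y t ≤ h t)
    (hh_avg : ∀ t : ℝ, t₀ ≤ t → ((t + τ : ℝ) : EReal) < T →
      (1 / τ) * ∫ s in t..(t + τ), h s ≤ b) :
    ∀ t : ℝ, t₀ ≤ t → (t : EReal) < T →
      y t ≤ y t₀ * Real.exp (-a * (t - t₀)) + b * τ / (1 - Real.exp (-a * τ)) := by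
  have hlt : ∀ s u : ℝ, s ≤ u → (u : EReal) < T → (s : EReal) < T := fun s u hsu hu =>
    lt_of_le_of_lt (by exact_mod_cast hsu) hu
  have hexp1 : Real.exp (-a * τ) < 1 := by
    rw [← Real.exp_zero]
    exact Real.exp_lt_exp.2 (by nlinarith)
  have hden : 0 < 1 - Real.exp (-a * τ) := by linarith
  set C := b * τ / (1 - Real.exp (-a * τ)) with hC
  have hbτC : b * τ ≤ C := by
    rw [hC, le_div_iff₀ hden]
    nlinarith [Real.exp_pos (-a * τ), mul_pos hb hτ0]
  have ht₀τT : ((t₀ + τ : ℝ) : EReal) < T := by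
    have h1 := EReal.add_lt_of_lt_sub hτT
    have h2 : ((t₀ + τ : ℝ) : EReal) = (τ : EReal) + (t₀ : EReal) := by
      rw [EReal.coe_add]; exact add_comm _ _
    rw [h2]; exact h1
  set E : ℝ → ℝ := fun s => Real.exp (a * (s - t₀)) with hEdef
  have hEc : Continuous E := by
    rw [hEdef]
    fun_prop
  have hhuv : ∀ u v : ℝ, t₀ ≤ u → t₀ ≤ v → (u : EReal) < T → (v : EReal) < T →
      IntervalIntegrable h volume u v := fun u v hu hv huT hvT =>
    (hh_int u hu huT).symm.trans (hh_int v hv hvT)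
  have EhInt : ∀ u v : ℝ, t₀ ≤ u → t₀ ≤ v → (u : EReal) < T → (v : EReal) < T →
      IntervalIntegrable (fun s => E s * h s) volume u v := fun u v hu hv h1 h2 =>
    (hhuv u v hu hv h1 h2).continuousOn_mul hEc.continuousOn
  have window : ∀ u v : ℝ, t₀ ≤ u → u ≤ v → v ≤ u + τ → ((u + τ : ℝ) : EReal) < T →
      ∫ s in u..v, E s * h s ≤ E v * (b * τ) := by
    intro u v hu huv hvuτ huτT
    have hvT : (v : EReal) < T := hlt v (u + τ) hvuτ huτT
    have huT : (u : EReal) < T := hlt u (u + τ) (by linarith) huτT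
    have hhv : IntervalIntegrable h volume u v := hhuv u v hu (hu.trans huv) huT hvT
    have hhuτ : IntervalIntegrable h volume u (u + τ) :=
      hhuv u (u + τ) hu (by linarith) huT huτT
    have step1 : ∫ s in u..v, E s * h s ≤ ∫ s in u..v, E v * h s := by
      apply intervalIntegral.integral_mono_on huv
        (hhv.continuousOn_mul hEc.continuousOn) (hhv.const_mul _)
      intro x hx
      have hx0 : 0 ≤ h x := hh_nonneg x (hu.trans hx.1) (hlt x v hx.2 hvT)
      have hEx : E x ≤ E v := Real.exp_le_exp.2 (by nlinarith [hx.2])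
      exact mul_le_mul_of_nonneg_right hEx hx0
    have step2 : ∫ s in u..v, h s ≤ ∫ s in u..(u + τ), h s := by
      apply intervalIntegral.integral_mono_interval le_rfl huv (by linarith) ?_ hhuτ
      filter_upwards [ae_restrict_mem measurableSet_Ioc] with x hx
      exact hh_nonneg x (hu.trans hx.1.le) (hlt x (u + τ) hx.2 huτT)
    have step3 : ∫ s in u..(u + τ), h s ≤ b * τ := by
      have havg := hh_avg u hu huτT
      rw [one_div, inv_mul_eq_div, div_le_iff₀ hτ0] at havg
      exact havg
    calc ∫ s in u..v, E s * h s ≤ E v * ∫ s in u..v, h s := by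
          rw [← intervalIntegral.integral_const_mul]; exact step1
      _ ≤ E v * (b * τ) :=
          mul_le_mul_of_nonneg_left (step2.trans step3) (Real.exp_pos _).le
  have key1 : ∀ n : ℕ, ∀ t : ℝ, t₀ ≤ t → (t : EReal) < T → t - t₀ ≤ (n + 1) * τ →
      ∫ s in t₀..t, E s * h s ≤ E t * C := by
    intro n
    induction n with
    | zero =>
      intro t ht htT hlen
      have hw : ∫ s in t₀..t, E s * h s ≤ E t * (b * τ) :=
        window t₀ t le_rfl ht (by push_cast at hlen; linarith) ht₀τT
      exact hw.trans (mul_le_mul_of_nonneg_left hbτC (Real.exp_pos _).le)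
    | succ n IH =>
      intro t ht htT hlen
      by_cases hcase : t - t₀ ≤ τ
      · have hw : ∫ s in t₀..t, E s * h s ≤ E t * (b * τ) :=
          window t₀ t le_rfl ht (by linarith) ht₀τT
        exact hw.trans (mul_le_mul_of_nonneg_left hbτC (Real.exp_pos _).le)
      · push_neg at hcase
        set t' := t - τ with ht'
        have h1 : t₀ ≤ t' := by rw [ht']; linarith
        have ht'T : (t' : EReal) < T := hlt t' t (by rw [ht']; linarith) htT
        have ht't : t' + τ = t := by rw [ht']; ring
        have hsplit : (∫ s in t₀..t', E s * h s) + ∫ s in t'..t, E s * h s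
            = ∫ s in t₀..t, E s * h s :=
          intervalIntegral.integral_add_adjacent_intervals
            (EhInt t₀ t' le_rfl h1 ht₀T ht'T) (EhInt t' t h1 ht ht'T htT)
        have hIH := IH t' h1 ht'T (by rw [ht']; push_cast at hlen ⊢; linarith)
        have hwin : ∫ s in t'..t, E s * h s ≤ E t * (b * τ) := by
          have hw := window t' t h1 (by rw [ht']; linarith) (by rw [ht't])
            (by rw [ht't]; exact htT)
          exact hw
        have hEt' : E t' = E t * Real.exp (-a * τ) := by
          simp only [hEdef, ht']
          rw [← Real.exp_add]; ring_nf
        have hfix : Real.exp (-a * τ) * C + b * τ = C := by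
          have hcd : C * (1 - Real.exp (-a * τ)) = b * τ := by
            rw [hC, div_mul_cancel₀ _ hden.ne']
          linear_combination (-1 : ℝ) * hcd
        calc ∫ s in t₀..t, E s * h s
            = (∫ s in t₀..t', E s * h s) + ∫ s in t'..t, E s * h s := hsplit.symm
          _ ≤ E t' * C + E t * (b * τ) := add_le_add hIH hwin
          _ = E t * C := by rw [hEt']; linear_combination (E t) * hfix
  intro t ht htT
  have hy'i := hy'_int t ht htT
  have hEhi := EhInt t₀ t le_rfl ht ht₀T htT
  set F : ℝ → ℝ := fun s => ∫ u in t₀..s, y' u with hFdef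
  set c := y t₀ with hc
  have hparts := odi_parts (c := c) ha ht hy'i
  have hyt : y t = c + F t := hy_ac t ht htT
  have hgi' : IntegrableOn y' (Set.Ioc t₀ t) volume := by
    simpa [intervalIntegrable_iff, Set.uIoc_of_le ht] using hy'i
  have hgIcc : IntegrableOn y' (Set.uIcc t₀ t) volume := by
    rw [IntegrableOn, Set.uIcc_of_le ht, ← Measure.restrict_congr_set Ioc_ae_eq_Icc]
    exact hgi'
  have hFcont : ContinuousOn F (Set.uIcc t₀ t) :=
    intervalIntegral.continuousOn_primitive_interval hgIcc
  have iG : IntervalIntegrable (fun s => E s * (y' s + a * (c + F s))) volume t₀ t := by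
    have hsplit : (fun s => E s * (y' s + a * (c + F s)))
        = fun s => E s * y' s + E s * (a * (c + F s)) := by funext s; ring
    rw [hsplit]
    exact (hy'i.continuousOn_mul hEc.continuousOn).add
      (ContinuousOn.intervalIntegrable (hEc.continuousOn.mul
        (continuousOn_const.mul (continuousOn_const.add hFcont))))
  have hmono : ∫ s in t₀..t, E s * (y' s + a * (c + F s)) ≤ ∫ s in t₀..t, E s * h s := by
    rw [intervalIntegral.integral_of_le ht, intervalIntegral.integral_of_le ht]
    apply setIntegral_mono_ae_restrict iG.1 hEhi.1
    have hsub : Set.Ioc t₀ t ⊆ {s : ℝ | t₀ < s ∧ (s : EReal) < T} :=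
      fun s hs => Set.mem_setOf.2 ⟨hs.1, hlt s t hs.2 htT⟩
    have hODI' : ∀ᵐ s ∂(volume.restrict (Set.Ioc t₀ t)), y' s + a * y s ≤ h s :=
      ae_restrict_of_ae_restrict_of_subset hsub hODI
    filter_upwards [hODI', ae_restrict_mem measurableSet_Ioc] with s hsODI hs
    have hys : y s = c + F s := hy_ac s hs.1.le (hlt s t hs.2 htT)
    rw [← hys]
    exact mul_le_mul_of_nonneg_left hsODI (Real.exp_pos _).le
  have hkey1 : ∫ s in t₀..t, E s * h s ≤ E t * C := by
    apply key1 (Nat.ceil ((t - t₀) / τ)) t ht htT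
    have h1 : (t - t₀) / τ ≤ (Nat.ceil ((t - t₀) / τ) : ℝ) := Nat.le_ceil _
    rw [div_le_iff₀ hτ0] at h1
    nlinarith [hτ0.le]
  have hfinal : E t * y t - c ≤ E t * C := by
    calc E t * y t - c = ∫ s in t₀..t, E s * (y' s + a * (c + F s)) := by
          rw [hparts, hyt]
      _ ≤ ∫ s in t₀..t, E s * h s := hmono
      _ ≤ E t * C := hkey1
  have hinv : Real.exp (-a * (t - t₀)) * E t = 1 := by
    rw [hEdef, ← Real.exp_add]
    ring_nf
    exact Real.exp_zero
  have h2 : Real.exp (-a * (t - t₀)) * E t * y t = y t := by rw [hinv, one_mul]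
  have h3 : Real.exp (-a * (t - t₀)) * E t * C = C := by rw [hinv, one_mul]
  have h4 := mul_le_mul_of_nonneg_left hfinal (Real.exp_pos (-a * (t - t₀))).le
  nlinarith [h2, h3, h4]
end

section
/- Let a ∈ ℝ and T ∈ (a, ∞], and set τ := min{1, (T − a)/2}. Suppose y : [a, T) → [0, ∞) is absolutely continuous on every compact subinterval of [a, T), and suppose there are constants L₁, L₂, L₃ > 0 and nonnegative continuous functions h, g : [a, T) → [0, ∞) such that ∫_t^{t+τ} y(s) ds ≤ L₁, ∫_t^{t+τ} h(s) ds ≤ L₂ and ∫_t^{t+τ} g(s) ds ≤ L₃ for all t ∈ (a, T − τ), and y'(t) ≤ h(t)·y(t) + g(t) for almost every t ∈ (a, T). Then y(t) ≤ (L₁/τ)·e^{L₂} + L₃·e^{L₂} for all t ∈ (a + τ, T). -/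
open MeasureTheory Real

/-- **Lemma (Gronwall-type uniform bound).** Let `a ∈ ℝ`, `T ∈ (a, ∞]`, and
`τ := min {1, (T − a)/2}` (encoded as `2τ = min {2, T − a}` in `EReal`).
Suppose `y : [a, T) → [0, ∞)` is absolutely continuous on compact subintervals
(encoded via `y t = y a + ∫_a^t y'` with `y'` locally integrable), and there are
constants `L₁, L₂, L₃ > 0` and nonnegative continuous `h, g : [a, T) → [0, ∞)` with
`∫_t^{t+τ} y ≤ L₁`, `∫_t^{t+τ} h ≤ L₂`, `∫_t^{t+τ} g ≤ L₃` for all `t ∈ (a, T − τ)`,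
and `y' t ≤ h t * y t + g t` for a.e. `t ∈ (a, T)`. Then
`y t ≤ (L₁/τ) e^{L₂} + L₃ e^{L₂}` for all `t ∈ (a + τ, T)`. -/
theorem gronwall_uniform_bound
    (T : EReal) (a τ L₁ L₂ L₃ : ℝ)
    (haT : (a : EReal) < T)
    (hτ : ((2 * τ : ℝ) : EReal) = min 2 (T - (a : EReal)))
    (hL₁ : 0 < L₁) (hL₂ : 0 < L₂) (hL₃ : 0 < L₃)
    (y y' h g : ℝ → ℝ)
    (hy_nonneg : ∀ t : ℝ, a ≤ t → (t : EReal) < T → 0 ≤ y t)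
    (hy'_int : ∀ t : ℝ, a ≤ t → (t : EReal) < T → IntervalIntegrable y' volume a t)
    (hy_ac : ∀ t : ℝ, a ≤ t → (t : EReal) < T → y t = y a + ∫ s in a..t, y' s)
    (hh_cont : ContinuousOn h {t : ℝ | a ≤ t ∧ (t : EReal) < T})
    (hg_cont : ContinuousOn g {t : ℝ | a ≤ t ∧ (t : EReal) < T})
    (hh_nonneg : ∀ t : ℝ, a ≤ t → (t : EReal) < T → 0 ≤ h t)
    (hg_nonneg : ∀ t : ℝ, a ≤ t → (t : EReal) < T → 0 ≤ g t)
    (hy_avg : ∀ t : ℝ, a < t → ((t + τ : ℝ) : EReal) < T → ∫ s in t..(t + τ), y s ≤ L₁)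
    (hh_avg : ∀ t : ℝ, a < t → ((t + τ : ℝ) : EReal) < T → ∫ s in t..(t + τ), h s ≤ L₂)
    (hg_avg : ∀ t : ℝ, a < t → ((t + τ : ℝ) : EReal) < T → ∫ s in t..(t + τ), g s ≤ L₃)
    (hODI : ∀ᵐ t ∂(volume.restrict {t : ℝ | a < t ∧ (t : EReal) < T}),
      y' t ≤ h t * y t + g t) :
    ∀ t : ℝ, a + τ < t → (t : EReal) < T →
      y t ≤ L₁ / τ * Real.exp L₂ + L₃ * Real.exp L₂ := by
  intro t ht htT
  -- τ is positive
  have hτpos : 0 < τ := by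
    have h1 : (0 : EReal) < T - (a : EReal) := by
      rw [EReal.lt_sub_iff_add_lt (Or.inl (EReal.coe_ne_bot a)) (Or.inl (EReal.coe_ne_top a))]
      simpa using haT
    have h2 : (((0 : ℝ)) : EReal) < ((2 * τ : ℝ) : EReal) := by
      rw [hτ]; exact lt_min (by norm_num) h1
    have := EReal.coe_lt_coe_iff.mp h2
    linarith
  -- pick a real t' with t < t' < T
  obtain ⟨t', htt', ht'T⟩ := EReal.lt_iff_exists_real_btwn.mp htT
  have htt : t < t' := EReal.coe_lt_coe_iff.mp htt'
  have hat : a < t := by linarith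
  have hat' : a < t' := by linarith
  set s₀ := t - τ with hs₀def
  have has₀ : a < s₀ := by simp only [hs₀def]; linarith
  have hs₀t : s₀ < t := by simp only [hs₀def]; linarith
  have hs₀τ : s₀ + τ = t := by simp only [hs₀def]; ring
  have hdomT : ∀ r : ℝ, r ≤ t' → (r : EReal) < T :=
    fun r h2 => lt_of_le_of_lt (EReal.coe_le_coe_iff.mpr h2) ht'T
  -- continuity of y on Icc a t'
  have hy'i : IntervalIntegrable y' volume a t' := hy'_int t' hat'.le (hdomT t' le_rfl)
  have hIcc : Set.Icc a t' = Set.uIcc a t' := (Set.uIcc_of_le hat'.le).symm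
  have hy_cont : ContinuousOn y (Set.Icc a t') := by
    have h1 : ContinuousOn (fun r => y a + ∫ u in a..r, y' u) (Set.Icc a t') := by
      rw [hIcc]
      exact continuousOn_const.add
        (intervalIntegral.continuousOn_primitive_interval' hy'i Set.left_mem_uIcc)
    exact h1.congr (fun r hr => (hy_ac r hr.1 (hdomT r hr.2)))
  have hsubS : Set.Icc a t' ⊆ {r : ℝ | a ≤ r ∧ (r : EReal) < T} :=
    fun r hr => ⟨hr.1, hdomT r hr.2⟩
  have hh_c : ContinuousOn h (Set.Icc a t') := hh_cont.mono hsubS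
  have hg_c : ContinuousOn g (Set.Icc a t') := hg_cont.mono hsubS
  have hF_c : ContinuousOn (fun r => h r * y r + g r) (Set.Icc a t') :=
    (hh_c.mul hy_cont).add hg_c
  have hIoosub : Set.Ioo a t' ⊆ Set.Icc a t' := Set.Ioo_subset_Icc_self
  -- integrability of continuous functions on subintervals
  have hII : ∀ f : ℝ → ℝ, ContinuousOn f (Set.Icc a t') → ∀ u v, u ∈ Set.Icc a t' →
      v ∈ Set.Icc a t' → IntervalIntegrable f volume u v := by
    intro f hf u v hu hv
    exact (hf.mono (Set.uIcc_subset_Icc hu hv)).intervalIntegrable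
  have htmem : t ∈ Set.Icc a t' := ⟨hat.le, htt.le⟩
  have hs₀mem : s₀ ∈ Set.Icc a t' := ⟨has₀.le, hs₀t.le.trans htt.le⟩
  -- nonnegativity of h and g on Icc a t'
  have hh_nn : ∀ r ∈ Set.Icc a t', 0 ≤ h r := fun r hr => hh_nonneg r hr.1 (hdomT r hr.2)
  have hg_nn : ∀ r ∈ Set.Icc a t', 0 ≤ g r := fun r hr => hg_nonneg r hr.1 (hdomT r hr.2)
  -- the key pointwise Gronwall estimate
  have key : ∀ s ∈ Set.Icc s₀ t, y t ≤ (y s + L₃) * Real.exp L₂ := by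
    intro s hs
    have has : a < s := lt_of_lt_of_le has₀ hs.1
    have hst : s ≤ t := hs.2
    have hsmem : s ∈ Set.Icc a t' := ⟨has.le, hst.trans htt.le⟩
    set F : ℝ → ℝ := fun r => h r * y r + g r with hFdef
    set φ : ℝ → ℝ := fun r => y s + ∫ u in s..r, F u with hφdef
    set H : ℝ → ℝ := fun r => ∫ u in s..r, h u with hHdef
    have hFi : ∀ r ∈ Set.Icc a t', IntervalIntegrable F volume s r :=
      fun r hr => hII F hF_c s r hsmem hr
    have hhi : ∀ r ∈ Set.Icc a t', IntervalIntegrable h volume s r :=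
      fun r hr => hII h hh_c s r hsmem hr
    -- y r ≤ φ r on [s, t]
    have hyφ : ∀ r ∈ Set.Icc s t, y r ≤ φ r := by
      intro r hr
      have hrmem : r ∈ Set.Icc a t' := ⟨has.le.trans hr.1, hr.2.trans htt.le⟩
      have hy'sr : IntervalIntegrable y' volume s r :=
        hy'i.mono_set (Set.uIcc_subset_uIcc (hIcc ▸ hsmem) (hIcc ▸ hrmem))
      have hy'as : IntervalIntegrable y' volume a s :=
        hy'i.mono_set (Set.uIcc_subset_uIcc Set.left_mem_uIcc (hIcc ▸ hsmem))
      have h1 : y r = y s + ∫ u in s..r, y' u := by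
        rw [hy_ac r hrmem.1 (hdomT r hrmem.2), hy_ac s hsmem.1 (hdomT s hsmem.2),
          add_assoc, intervalIntegral.integral_add_adjacent_intervals hy'as hy'sr]
      have h2 : (∫ u in s..r, y' u) ≤ ∫ u in s..r, F u := by
        refine intervalIntegral.integral_mono_ae_restrict hr.1 hy'sr (hFi r hrmem) ?_
        refine ae_restrict_of_ae_restrict_of_subset ?_ hODI
        intro x hx
        exact ⟨lt_of_lt_of_le has hx.1, hdomT x (hx.2.trans (hr.2.trans htt.le))⟩
      have : φ r = y s + ∫ u in s..r, F u := rfl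
      rw [h1, this]
      linarith
    -- derivatives of φ and H on Ioo a t'
    have hcontAt : ∀ f : ℝ → ℝ, ContinuousOn f (Set.Icc a t') → ∀ r ∈ Set.Ioo a t',
        ContinuousAt f r := fun f hf r hr => hf.continuousAt (Icc_mem_nhds hr.1 hr.2)
    have hmeasF := ContinuousOn.stronglyMeasurableAtFilter (μ := volume)
      isOpen_Ioo (hF_c.mono hIoosub)
    have hmeash := ContinuousOn.stronglyMeasurableAtFilter (μ := volume)
      isOpen_Ioo (hh_c.mono hIoosub)
    have hφ' : ∀ r ∈ Set.Ioo a t', HasDerivAt φ (F r) r := fun r hr =>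
      (intervalIntegral.integral_hasDerivAt_right (hFi r (hIoosub hr)) (hmeasF r hr)
        (hcontAt F hF_c r hr)).const_add (y s)
    have hH' : ∀ r ∈ Set.Ioo a t', HasDerivAt H (h r) r := fun r hr =>
      intervalIntegral.integral_hasDerivAt_right (hhi r (hIoosub hr)) (hmeash r hr)
        (hcontAt h hh_c r hr)
    have hIccst : Set.Icc s t ⊆ Set.Ioo a t' :=
      fun r hr => ⟨lt_of_lt_of_le has hr.1, lt_of_le_of_lt hr.2 htt⟩
    have hH_c : ContinuousOn H (Set.Ioo a t') :=
      fun r hr => ((hH' r hr).continuousAt).continuousWithinAt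
    set G : ℝ → ℝ := fun u => g u * Real.exp (-(H u)) with hGdef
    have hG_c : ContinuousOn G (Set.Ioo a t') :=
      (hg_c.mono hIoosub).mul (Real.continuous_exp.comp_continuousOn hH_c.neg)
    have hGi : ∀ r ∈ Set.Icc s t, IntervalIntegrable G volume s r := by
      intro r hr
      refine (hG_c.mono ?_).intervalIntegrable
      refine subset_trans ?_ hIccst
      rw [Set.uIcc_of_le hr.1]
      exact Set.Icc_subset_Icc le_rfl hr.2
    have hmeasG := ContinuousOn.stronglyMeasurableAtFilter (μ := volume) isOpen_Ioo hG_c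
    set ψ : ℝ → ℝ := fun r => φ r * Real.exp (-(H r)) - ∫ u in s..r, G u with hψdef
    have hψ' : ∀ r ∈ Set.Icc s t, HasDerivAt ψ
        (F r * Real.exp (-(H r)) + φ r * (Real.exp (-(H r)) * -(h r)) - G r) r := by
      intro r hr
      have hr' : r ∈ Set.Ioo a t' := hIccst hr
      have h1 : HasDerivAt (fun u => Real.exp (-(H u))) (Real.exp (-(H r)) * -(h r)) r :=
        ((hH' r hr').neg).exp
      have h2 : HasDerivAt (fun u => φ u * Real.exp (-(H u)))
          (F r * Real.exp (-(H r)) + φ r * (Real.exp (-(H r)) * -(h r))) r :=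
        (hφ' r hr').mul h1
      have h3 : HasDerivAt (fun u => ∫ x in s..u, G x) (G r) r :=
        intervalIntegral.integral_hasDerivAt_right (hGi r hr) (hmeasG r hr')
          ((hG_c.continuousAt (IsOpen.mem_nhds isOpen_Ioo hr')))
      exact h2.sub h3
    have hanti : AntitoneOn ψ (Set.Icc s t) := by
      refine antitoneOn_of_deriv_nonpos (convex_Icc s t)
        (fun r hr => ((hψ' r hr).continuousAt).continuousWithinAt)
        (fun r hr => ?_) (fun r hr => ?_)
      · rw [interior_Icc] at hr
        exact ((hψ' r (Set.Ioo_subset_Icc_self hr)).differentiableAt).differentiableWithinAt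
      · rw [interior_Icc] at hr
        have hr' := Set.Ioo_subset_Icc_self hr
        rw [(hψ' r hr').deriv]
        have e1 : 0 < Real.exp (-(H r)) := Real.exp_pos _
        have e2 : 0 ≤ h r := hh_nn r ⟨has.le.trans hr'.1, hr'.2.trans htt.le⟩
        have e3 : y r ≤ φ r := hyφ r hr'
        have hGr : G r = g r * Real.exp (-(H r)) := rfl
        have hFr : F r = h r * y r + g r := rfl
        rw [hGr, hFr]
        nlinarith [mul_nonneg e2 (sub_nonneg.mpr e3)]
    have hψts : ψ t ≤ ψ s :=
      hanti (Set.left_mem_Icc.mpr hst) (Set.right_mem_Icc.mpr hst) hst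
    have hψs : ψ s = y s := by
      simp [hψdef, hφdef, hHdef, intervalIntegral.integral_same]
    -- bounds on H t and ∫ G
    have hhs₀i : IntervalIntegrable h volume s₀ s := hII h hh_c s₀ s hs₀mem hsmem
    have hhst : IntervalIntegrable h volume s t := hhi t htmem
    have hHtL₂ : H t ≤ L₂ := by
      have havg : (∫ u in s₀..t, h u) ≤ L₂ := by
        have := hh_avg s₀ has₀ (by rw [hs₀τ]; exact htT)
        rwa [hs₀τ] at this
      have hsplit : (∫ u in s₀..s, h u) + ∫ u in s..t, h u = ∫ u in s₀..t, h u :=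
        intervalIntegral.integral_add_adjacent_intervals hhs₀i hhst
      have hnn : 0 ≤ ∫ u in s₀..s, h u := by
        apply intervalIntegral.integral_nonneg hs.1
        intro u hu
        exact hh_nn u ⟨has₀.le.trans hu.1, hu.2.trans (hst.trans htt.le)⟩
      have : H t = ∫ u in s..t, h u := rfl
      rw [this]
      linarith
    have hHnn : ∀ u ∈ Set.Icc s t, 0 ≤ H u := by
      intro u hu
      apply intervalIntegral.integral_nonneg hu.1
      intro v hv
      exact hh_nn v ⟨has.le.trans hv.1, (hv.2.trans hu.2).trans htt.le⟩
    have hgst : IntervalIntegrable g volume s t := hII g hg_c s t hsmem htmem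
    have hgs₀s : IntervalIntegrable g volume s₀ s := hII g hg_c s₀ s hs₀mem hsmem
    have hGL₃ : (∫ u in s..t, G u) ≤ L₃ := by
      have h1 : (∫ u in s..t, G u) ≤ ∫ u in s..t, g u := by
        refine intervalIntegral.integral_mono_on hst (hGi t (Set.right_mem_Icc.mpr hst))
          hgst ?_
        intro u hu
        have : G u = g u * Real.exp (-(H u)) := rfl
        rw [this]
        have hg0 : 0 ≤ g u := hg_nn u ⟨has.le.trans hu.1, hu.2.trans htt.le⟩
        have he1 : Real.exp (-(H u)) ≤ 1 := Real.exp_le_one_iff.mpr (by linarith [hHnn u hu])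
        nlinarith
      have havg : (∫ u in s₀..t, g u) ≤ L₃ := by
        have := hg_avg s₀ has₀ (by rw [hs₀τ]; exact htT)
        rwa [hs₀τ] at this
      have hsplit : (∫ u in s₀..s, g u) + ∫ u in s..t, g u = ∫ u in s₀..t, g u :=
        intervalIntegral.integral_add_adjacent_intervals hgs₀s hgst
      have hnn : 0 ≤ ∫ u in s₀..s, g u := by
        apply intervalIntegral.integral_nonneg hs.1
        intro u hu
        exact hg_nn u ⟨has₀.le.trans hu.1, hu.2.trans (hst.trans htt.le)⟩
      linarith
    -- conclude
    have hys : 0 ≤ y s := hy_nonneg s hsmem.1 (hdomT s hsmem.2)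
    have hψt : φ t * Real.exp (-(H t)) - (∫ u in s..t, G u) ≤ y s := by
      have : ψ t = φ t * Real.exp (-(H t)) - ∫ u in s..t, G u := rfl
      rw [← this, ← hψs]; exact hψts
    have hφt : φ t ≤ (y s + ∫ u in s..t, G u) * Real.exp (H t) := by
      have e1 : 0 < Real.exp (-(H t)) := Real.exp_pos _
      have e2 : Real.exp (-(H t)) * Real.exp (H t) = 1 := by
        rw [← Real.exp_add]; simp
      nlinarith [Real.exp_pos (H t)]
    have hyt : y t ≤ φ t := hyφ t (Set.right_mem_Icc.mpr hst)
    have hfinal : (y s + ∫ u in s..t, G u) * Real.exp (H t) ≤ (y s + L₃) * Real.exp L₂ := by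
      apply mul_le_mul (by linarith) (Real.exp_le_exp.mpr hHtL₂) (Real.exp_pos _).le
      linarith
    linarith
  -- integrate the key estimate over s ∈ [s₀, t]
  have hyi : IntervalIntegrable y volume s₀ t := hII y hy_cont s₀ t hs₀mem htmem
  have hrhsint : IntervalIntegrable (fun s => (y s + L₃) * Real.exp L₂) volume s₀ t :=
    ((hyi.add (intervalIntegrable_const)).mul_const _)
  have h1 : τ * y t ≤ ∫ s in s₀..t, (y s + L₃) * Real.exp L₂ := by
    have := intervalIntegral.integral_mono_on hs₀t.le intervalIntegrable_const hrhsint key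
    rwa [intervalIntegral.integral_const, smul_eq_mul,
      show t - s₀ = τ by simp [hs₀def]] at this
  have h2 : (∫ s in s₀..t, (y s + L₃) * Real.exp L₂)
      = ((∫ s in s₀..t, y s) + τ * L₃) * Real.exp L₂ := by
    rw [intervalIntegral.integral_mul_const,
      intervalIntegral.integral_add hyi intervalIntegrable_const,
      intervalIntegral.integral_const, smul_eq_mul,
      show t - s₀ = τ by simp [hs₀def]]
  have h3 : (∫ s in s₀..t, y s) ≤ L₁ := by
    have := hy_avg s₀ has₀ (by rw [hs₀τ]; exact htT)
    rwa [hs₀τ] at this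
  have h4 : τ * y t ≤ (L₁ + τ * L₃) * Real.exp L₂ := by
    calc τ * y t ≤ ((∫ s in s₀..t, y s) + τ * L₃) * Real.exp L₂ := by rw [← h2]; exact h1
    _ ≤ (L₁ + τ * L₃) * Real.exp L₂ := by
        apply mul_le_mul_of_nonneg_right (by linarith) (Real.exp_pos _).le
  have h5 : τ * (L₁ / τ * Real.exp L₂ + L₃ * Real.exp L₂) = (L₁ + τ * L₃) * Real.exp L₂ := by
    field_simp
  have h6 : τ * y t ≤ τ * (L₁ / τ * Real.exp L₂ + L₃ * Real.exp L₂) := by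
    rw [h5]; exact h4
  exact le_of_mul_le_mul_left h6 hτpos
end
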